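/- The tail energy of the soliton is nonnegative: for every λ ≥ 0, (1/2)·∫_λ^∞ φ'(x)² dx ≥ (1/6)·∫_λ^∞ φ(x)⁶ dx. -/

import Mathlib

open Real MeasureTheory Set Filter Topology

/-- The soliton `φ(x) = cosh(2x/√3)^(-1/2)`. -/
noncomputable def soliton (x : ℝ) : ℝ := (Real.cosh (2 * x / Real.sqrt 3)) ^ (-(1/2) : ℝ)

lemma sqrt3_pos : (0:ℝ) < Real.sqrt 3 := Real.sqrt_pos.mpr (by norm_num)

lemma hasDerivAt_soliton (x : ℝ) :
    HasDerivAt soliton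
      (-(1/2) * Real.cosh (2 * x / Real.sqrt 3) ^ (-(3/2) : ℝ)
        * (Real.sinh (2 * x / Real.sqrt 3) * (2 / Real.sqrt 3))) x := by
  have h1 : HasDerivAt (fun x : ℝ => 2 * x / Real.sqrt 3) (2 / Real.sqrt 3) x := by
    simpa using ((hasDerivAt_id x).const_mul 2).div_const (Real.sqrt 3)
  have h2 : HasDerivAt (fun x : ℝ => Real.cosh (2 * x / Real.sqrt 3))
      (Real.sinh (2 * x / Real.sqrt 3) * (2 / Real.sqrt 3)) x :=
    (Real.hasDerivAt_cosh _).comp x h1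
  have h3 := (Real.hasDerivAt_rpow_const
      (p := (-(1/2) : ℝ)) (Or.inl (ne_of_gt (Real.cosh_pos (2 * x / Real.sqrt 3))))).comp x h2
  refine h3.congr_deriv ?_
  ring_nf

lemma deriv_soliton_sq (x : ℝ) :
    (deriv soliton x) ^ 2
      = (1/3) * (Real.sinh (2 * x / Real.sqrt 3) ^ 2 / Real.cosh (2 * x / Real.sqrt 3) ^ 3) := by
  have hC : (0:ℝ) < Real.cosh (2 * x / Real.sqrt 3) := Real.cosh_pos _
  rw [(hasDerivAt_soliton x).deriv]
  have h1 : (Real.cosh (2 * x / Real.sqrt 3) ^ (-(3/2) : ℝ)) ^ 2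
      = (Real.cosh (2 * x / Real.sqrt 3) ^ 3)⁻¹ := by
    rw [← Real.rpow_natCast (Real.cosh (2 * x / Real.sqrt 3) ^ (-(3/2) : ℝ)) 2,
      ← Real.rpow_mul hC.le]
    norm_num
  have h2 : (2 / Real.sqrt 3) ^ 2 = 4 / 3 := by
    rw [div_pow, Real.sq_sqrt (by norm_num : (3:ℝ) ≥ 0)]
    norm_num
  rw [mul_pow, mul_pow, mul_pow, h1, h2]
  field_simp
  ring

lemma soliton_pow_six (x : ℝ) :
    (soliton x) ^ 6 = 1 / Real.cosh (2 * x / Real.sqrt 3) ^ 3 := by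
  have hC : (0:ℝ) < Real.cosh (2 * x / Real.sqrt 3) := Real.cosh_pos _
  unfold soliton
  rw [← Real.rpow_natCast (Real.cosh (2 * x / Real.sqrt 3) ^ (-(1/2) : ℝ)) 6,
    ← Real.rpow_mul hC.le]
  norm_num

lemma inv_cosh_le (y : ℝ) : (Real.cosh y)⁻¹ ≤ 2 * Real.exp (-y) := by
  rw [Real.exp_neg]
  have h : Real.exp y / 2 ≤ Real.cosh y := by
    rw [Real.cosh_eq]
    have := (Real.exp_pos (-y)).le
    linarith
  have h2 : (Real.cosh y)⁻¹ ≤ (Real.exp y / 2)⁻¹ :=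
    inv_anti₀ (by positivity) h
  calc (Real.cosh y)⁻¹ ≤ (Real.exp y / 2)⁻¹ := h2
    _ = 2 * (Real.exp y)⁻¹ := by rw [inv_div]; ring

lemma A_le (y : ℝ) : 1 / Real.cosh y ^ 3 ≤ 2 * Real.exp (-y) := by
  have h1 : (1:ℝ) ≤ Real.cosh y := Real.one_le_cosh y
  have h2 : Real.cosh y ≤ Real.cosh y ^ 3 := le_self_pow₀ h1 (by norm_num)
  calc 1 / Real.cosh y ^ 3 ≤ 1 / Real.cosh y :=
        one_div_le_one_div_of_le (Real.cosh_pos y) h2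
    _ = (Real.cosh y)⁻¹ := one_div _
    _ ≤ 2 * Real.exp (-y) := inv_cosh_le y

lemma B_le (y : ℝ) : (1/3) * (Real.sinh y ^ 2 / Real.cosh y ^ 3) ≤ 2 * Real.exp (-y) := by
  have hC : (0:ℝ) < Real.cosh y := Real.cosh_pos y
  have hs : Real.sinh y ^ 2 ≤ Real.cosh y ^ 2 := by
    have := Real.cosh_sq y; linarith
  have h1 : Real.sinh y ^ 2 / Real.cosh y ^ 3 ≤ Real.cosh y ^ 2 / Real.cosh y ^ 3 := by
    gcongr
  have h2 : Real.cosh y ^ 2 / Real.cosh y ^ 3 = (Real.cosh y)⁻¹ := by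
    field_simp
  have h3 : (0:ℝ) ≤ Real.sinh y ^ 2 / Real.cosh y ^ 3 := by positivity
  have h4 := inv_cosh_le y
  nlinarith

/-- The antiderivative `F`. -/
noncomputable def Fsol (x : ℝ) : ℝ :=
  -(Real.sqrt 3 / 2) * (Real.sinh (2 * x / Real.sqrt 3) / Real.cosh (2 * x / Real.sqrt 3) ^ 2)

lemma hasDerivAt_Fsol (x : ℝ) :
    HasDerivAt Fsol
      ((Real.sinh (2 * x / Real.sqrt 3) ^ 2 - 1) / Real.cosh (2 * x / Real.sqrt 3) ^ 3) x := by
  have hC : (0:ℝ) < Real.cosh (2 * x / Real.sqrt 3) := Real.cosh_pos _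
  have h1 : HasDerivAt (fun x : ℝ => 2 * x / Real.sqrt 3) (2 / Real.sqrt 3) x := by
    simpa using ((hasDerivAt_id x).const_mul 2).div_const (Real.sqrt 3)
  have hs : HasDerivAt (fun x : ℝ => Real.sinh (2 * x / Real.sqrt 3))
      (Real.cosh (2 * x / Real.sqrt 3) * (2 / Real.sqrt 3)) x :=
    (Real.hasDerivAt_sinh _).comp x h1
  have hc2 : HasDerivAt (fun x : ℝ => Real.cosh (2 * x / Real.sqrt 3) ^ 2)
      ((2 : ℕ) * Real.cosh (2 * x / Real.sqrt 3) ^ 1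
        * (Real.sinh (2 * x / Real.sqrt 3) * (2 / Real.sqrt 3))) x :=
    ((Real.hasDerivAt_cosh _).comp x h1).pow 2
  have hdiv := hs.div hc2 (by positivity)
  have h := hdiv.const_mul (-(Real.sqrt 3 / 2))
  refine h.congr_deriv ?_
  have h3 : Real.sqrt 3 * Real.sqrt 3 = 3 := Real.mul_self_sqrt (by norm_num)
  have hcs : Real.cosh (2 * x / Real.sqrt 3) ^ 2
      = Real.sinh (2 * x / Real.sqrt 3) ^ 2 + 1 := Real.cosh_sq _
  push_cast
  rw [pow_one]
  field_simp
  linear_combination (-1 : ℝ) * hcs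

lemma tendsto_Fsol : Tendsto Fsol atTop (𝓝 0) := by
  apply squeeze_zero_norm (a := fun x => Real.sqrt 3 * Real.exp (-(2 * x / Real.sqrt 3)))
  · intro x
    have hC : (0:ℝ) < Real.cosh (2 * x / Real.sqrt 3) := Real.cosh_pos _
    have habs : |Real.sinh (2 * x / Real.sqrt 3)| ≤ Real.cosh (2 * x / Real.sqrt 3) := by
      have e1 := Real.exp_pos (2 * x / Real.sqrt 3)
      have e2 := Real.exp_pos (-(2 * x / Real.sqrt 3))
      rw [abs_le, Real.sinh_eq, Real.cosh_eq]
      constructor <;> nlinarith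
    have h1 : |Real.sinh (2 * x / Real.sqrt 3)| / Real.cosh (2 * x / Real.sqrt 3) ^ 2
        ≤ (Real.cosh (2 * x / Real.sqrt 3))⁻¹ := by
      rw [div_le_iff₀ (by positivity), pow_two, inv_mul_cancel_left₀ hC.ne']
      exact habs
    have h2 := inv_cosh_le (2 * x / Real.sqrt 3)
    unfold Fsol
    rw [norm_mul, norm_div, Real.norm_eq_abs, Real.norm_eq_abs, Real.norm_eq_abs,
      abs_of_nonneg (sq_nonneg _ : (0:ℝ) ≤ Real.cosh (2 * x / Real.sqrt 3) ^ 2),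
      abs_neg, abs_of_nonneg (by positivity : (0:ℝ) ≤ Real.sqrt 3 / 2)]
    calc Real.sqrt 3 / 2 * (|Real.sinh (2 * x / Real.sqrt 3)| / Real.cosh (2 * x / Real.sqrt 3) ^ 2)
        ≤ Real.sqrt 3 / 2 * (2 * Real.exp (-(2 * x / Real.sqrt 3))) := by
          have := le_trans h1 h2
          gcongr
      _ = Real.sqrt 3 * Real.exp (-(2 * x / Real.sqrt 3)) := by ring
  · have h : Tendsto (fun x : ℝ => 2 * x / Real.sqrt 3) atTop atTop :=
      (tendsto_id.const_mul_atTop (by norm_num : (0:ℝ) < 2)).atTop_div_const sqrt3_pos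
    have := (Real.tendsto_exp_neg_atTop_nhds_zero.comp h).const_mul (Real.sqrt 3)
    simpa using this

theorem stmt_14 (l : ℝ) (hl : 0 ≤ l) :
    (1/6) * ∫ x in Set.Ioi l, (soliton x) ^ 6
      ≤ (1/2) * ∫ x in Set.Ioi l, (deriv soliton x) ^ 2 := by
  have hc : (0:ℝ) < 2 / Real.sqrt 3 := by positivity
  have base : IntegrableOn (fun x => 2 * Real.exp (-(2 / Real.sqrt 3) * x)) (Ioi l) volume :=
    (exp_neg_integrableOn_Ioi l hc).const_mul 2
  have base' : IntegrableOn (fun x => 2 * Real.exp (-(2 * x / Real.sqrt 3))) (Ioi l) volume := by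
    have heq : (fun x : ℝ => 2 * Real.exp (-(2 / Real.sqrt 3) * x))
        = fun x : ℝ => 2 * Real.exp (-(2 * x / Real.sqrt 3)) := by
      funext x; ring_nf
    rwa [heq] at base
  have hcontC : Continuous (fun x : ℝ => Real.cosh (2 * x / Real.sqrt 3)) :=
    Real.continuous_cosh.comp (by continuity)
  have hcontS : Continuous (fun x : ℝ => Real.sinh (2 * x / Real.sqrt 3)) :=
    Real.continuous_sinh.comp (by continuity)
  have hCne : ∀ x : ℝ, Real.cosh (2 * x / Real.sqrt 3) ^ 3 ≠ 0 :=
    fun x => by positivity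
  have intA : IntegrableOn (fun x => (soliton x) ^ 6) (Ioi l) volume := by
    simp only [soliton_pow_six]
    refine base'.mono' ?_ ?_
    · exact (continuous_const.div (hcontC.pow 3) hCne).aestronglyMeasurable
    · filter_upwards with x
      rw [Real.norm_eq_abs, abs_of_nonneg (by positivity)]
      exact A_le _
  have intB : IntegrableOn (fun x => (deriv soliton x) ^ 2) (Ioi l) volume := by
    simp only [deriv_soliton_sq]
    refine base'.mono' ?_ ?_
    · exact (continuous_const.mul ((hcontS.pow 2).div (hcontC.pow 3) hCne)).aestronglyMeasurable
    · filter_upwards with x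
      rw [Real.norm_eq_abs, abs_of_nonneg (by positivity)]
      exact B_le _
  rw [← sub_nonneg]
  have key : (1/2) * (∫ x in Ioi l, (deriv soliton x) ^ 2)
      - (1/6) * (∫ x in Ioi l, (soliton x) ^ 6)
      = ∫ x in Ioi l, ((1/2) * (deriv soliton x) ^ 2 - (1/6) * (soliton x) ^ 6) := by
    rw [integral_sub (intB.const_mul _) (intA.const_mul _), integral_const_mul,
      integral_const_mul]
  rw [key]
  have intF' : IntegrableOn
      (fun x => (Real.sinh (2 * x / Real.sqrt 3) ^ 2 - 1) / Real.cosh (2 * x / Real.sqrt 3) ^ 3)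
      (Ioi l) volume := by
    have h := (intB.const_mul 3).sub intA
    refine h.congr (ae_of_all _ fun x => ?_)
    simp only [Pi.sub_apply]
    rw [deriv_soliton_sq, soliton_pow_six]
    field_simp
  have hFTC := integral_Ioi_of_hasDerivAt_of_tendsto' (a := l)
    (fun x _ => hasDerivAt_Fsol x) intF' tendsto_Fsol
  have hsplit : ∫ x in Ioi l, ((1/2) * (deriv soliton x) ^ 2 - (1/6) * (soliton x) ^ 6)
      = (1/6) * ∫ x in Ioi l,
          (Real.sinh (2 * x / Real.sqrt 3) ^ 2 - 1) / Real.cosh (2 * x / Real.sqrt 3) ^ 3 := by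
    rw [← integral_const_mul]
    refine integral_congr_ae (ae_of_all _ fun x => ?_)
    simp only [deriv_soliton_sq, soliton_pow_six]
    field_simp
    ring
  rw [hsplit, hFTC]
  have hFl : Fsol l ≤ 0 := by
    have hy : (0:ℝ) ≤ 2 * l / Real.sqrt 3 := by positivity
    have hs : (0:ℝ) ≤ Real.sinh (2 * l / Real.sqrt 3) := Real.sinh_nonneg_iff.mpr hy
    have hC : (0:ℝ) < Real.cosh (2 * l / Real.sqrt 3) := Real.cosh_pos _
    unfold Fsol
    have h1 : (0:ℝ) ≤ Real.sinh (2 * l / Real.sqrt 3) / Real.cosh (2 * l / Real.sqrt 3) ^ 2 :=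
      div_nonneg hs (by positivity)
    have h2 : (0:ℝ) ≤ Real.sqrt 3 / 2 := by positivity
    nlinarith
  linarith
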